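/- Let α ∈ O(2) be an element of the dihedral group generated by reflections across lines at angles 0 and π/b with b odd, and let r₂ be the reflection across the y-axis. If v ∈ ℝ² is a nonzero vector with (α ∘ r₂)(v) = ±v and the direction of v is not a multiple of π/b nor π/2 plus a multiple of π/b (mod π), then α ∘ r₂ is the rotation by π and α is the reflection across the x-axis. -/

import Mathlib

/-- Rotation of ℝ² by angle `φ`, as a 2×2 matrix. -/
noncomputable def rotMat (φ : ℝ) : Matrix (Fin 2) (Fin 2) ℝ :=
  !![Real.cos φ, -Real.sin φ; Real.sin φ, Real.cos φ]

/-- Linear reflection of ℝ² across the line through the origin at angle `θ`. -/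
noncomputable def reflMat (θ : ℝ) : Matrix (Fin 2) (Fin 2) ℝ :=
  !![Real.cos (2*θ), Real.sin (2*θ); Real.sin (2*θ), -Real.cos (2*θ)]

lemma rot_mul_rot (a c : ℝ) : rotMat a * rotMat c = rotMat (a+c) := by
  simp [rotMat, Matrix.mul_fin_two, Real.cos_add, Real.sin_add]; ring_nf; simp
lemma rot_mul_refl (a θ : ℝ) : rotMat a * reflMat θ = reflMat (θ + a/2) := by
  have h2 : 2*(θ + a/2) = 2*θ + a := by ring
  simp [rotMat, reflMat, Matrix.mul_fin_two, h2, Real.cos_add, Real.sin_add]; ring_nf; simp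
lemma refl_mul_rot (θ a : ℝ) : reflMat θ * rotMat a = reflMat (θ - a/2) := by
  have h2 : 2*(θ - a/2) = 2*θ - a := by ring
  simp [rotMat, reflMat, Matrix.mul_fin_two, h2, Real.cos_sub, Real.sin_sub]; ring_nf; simp
lemma refl_mul_refl (θ₁ θ₂ : ℝ) : reflMat θ₁ * reflMat θ₂ = rotMat (2*(θ₁-θ₂)) := by
  have h2 : 2*(θ₁-θ₂) = 2*θ₁ - 2*θ₂ := by ring
  simp [rotMat, reflMat, Matrix.mul_fin_two, h2, Real.cos_sub, Real.sin_sub]; ring_nf; simp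
lemma rot_zero : rotMat 0 = 1 := by
  simp [rotMat]; exact (Matrix.one_fin_two).symm

lemma dihedral_classify (b : ℕ) (g₀ g₁ : Matrix.orthogonalGroup (Fin 2) ℝ)
    (hg₀ : (g₀ : Matrix (Fin 2) (Fin 2) ℝ) = reflMat 0)
    (hg₁ : (g₁ : Matrix (Fin 2) (Fin 2) ℝ) = reflMat (Real.pi / b))
    (α : Matrix.orthogonalGroup (Fin 2) ℝ) (hα : α ∈ Subgroup.closure {g₀, g₁}) :
    (∃ k : ℤ, (α : Matrix (Fin 2) (Fin 2) ℝ) = rotMat (2 * k * Real.pi / b)) ∨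
    (∃ k : ℤ, (α : Matrix (Fin 2) (Fin 2) ℝ) = reflMat ((k : ℝ) * Real.pi / b)) := by
  induction hα using Subgroup.closure_induction with
  | mem x hx =>
      rcases hx with rfl | rfl
      · right; exact ⟨0, by rw [hg₀]; norm_num⟩
      · right; exact ⟨1, by rw [hg₁]; norm_num⟩
  | one =>
      left; refine ⟨0, ?_⟩
      have h0 : 2 * ((0:ℤ):ℝ) * Real.pi / (b:ℝ) = 0 := by push_cast; ring
      rw [h0, rot_zero]; rfl
  | mul x y hx hy ihx ihy =>
      have hxy : ((x * y : Matrix.orthogonalGroup (Fin 2) ℝ) : Matrix (Fin 2) (Fin 2) ℝ)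
          = (x : Matrix (Fin 2) (Fin 2) ℝ) * (y : Matrix (Fin 2) (Fin 2) ℝ) := rfl
      rcases ihx with ⟨k₁, h₁⟩ | ⟨k₁, h₁⟩ <;> rcases ihy with ⟨k₂, h₂⟩ | ⟨k₂, h₂⟩
      · left; refine ⟨k₁ + k₂, ?_⟩
        rw [hxy, h₁, h₂, rot_mul_rot]
        congr 1; push_cast; ring
      · right; refine ⟨k₂ + k₁, ?_⟩
        rw [hxy, h₁, h₂, rot_mul_refl]
        congr 1; push_cast; ring
      · right; refine ⟨k₁ - k₂, ?_⟩
        rw [hxy, h₁, h₂, refl_mul_rot]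
        congr 1; push_cast; ring
      · left; refine ⟨k₁ - k₂, ?_⟩
        rw [hxy, h₁, h₂, refl_mul_refl]
        congr 1; push_cast; ring
  | inv x hx ihx =>
      have hinv : ((x⁻¹ * x : Matrix.orthogonalGroup (Fin 2) ℝ) : Matrix (Fin 2) (Fin 2) ℝ)
          = ((x⁻¹ : Matrix.orthogonalGroup (Fin 2) ℝ) : Matrix (Fin 2) (Fin 2) ℝ)
            * (x : Matrix (Fin 2) (Fin 2) ℝ) := rfl
      have h1 : ((x⁻¹ : Matrix.orthogonalGroup (Fin 2) ℝ) : Matrix (Fin 2) (Fin 2) ℝ)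
          * (x : Matrix (Fin 2) (Fin 2) ℝ) = 1 := by
        rw [← hinv, inv_mul_cancel]; rfl
      rcases ihx with ⟨k, h⟩ | ⟨k, h⟩
      · left; refine ⟨-k, ?_⟩
        have : rotMat (2 * (k:ℝ) * Real.pi / b) * rotMat (2 * (-k:ℤ) * Real.pi / b) = 1 := by
          rw [rot_mul_rot]
          have : 2 * (k:ℝ) * Real.pi / b + 2 * ((-k:ℤ):ℝ) * Real.pi / b = 0 := by
            push_cast; ring
          rw [this, rot_zero]
        calc ((x⁻¹ : Matrix.orthogonalGroup (Fin 2) ℝ) : Matrix (Fin 2) (Fin 2) ℝ)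
            = ↑x⁻¹ * ((x : Matrix (Fin 2) (Fin 2) ℝ) * rotMat (2 * ((-k:ℤ):ℝ) * Real.pi / b)) := by
              rw [h, this, mul_one]
          _ = (↑x⁻¹ * (x : Matrix (Fin 2) (Fin 2) ℝ)) * rotMat (2 * ((-k:ℤ):ℝ) * Real.pi / b) :=
              (mul_assoc _ _ _).symm
          _ = rotMat (2 * ((-k:ℤ):ℝ) * Real.pi / b) := by rw [h1, one_mul]
      · right; refine ⟨k, ?_⟩
        have hrr : reflMat ((k:ℝ) * Real.pi / b) * reflMat ((k:ℝ) * Real.pi / b) = 1 := by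
          rw [refl_mul_refl, sub_self, mul_zero, rot_zero]
        calc ((x⁻¹ : Matrix.orthogonalGroup (Fin 2) ℝ) : Matrix (Fin 2) (Fin 2) ℝ)
            = ↑x⁻¹ * ((x : Matrix (Fin 2) (Fin 2) ℝ) * reflMat ((k:ℝ) * Real.pi / b)) := by
              rw [h, hrr, mul_one]
          _ = (↑x⁻¹ * (x : Matrix (Fin 2) (Fin 2) ℝ)) * reflMat ((k:ℝ) * Real.pi / b) :=
              (mul_assoc _ _ _).symm
          _ = reflMat ((k:ℝ) * Real.pi / b) := by rw [h1, one_mul]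

lemma mulVec0 (M : Matrix (Fin 2) (Fin 2) ℝ) (v : Fin 2 → ℝ) :
    M.mulVec v 0 = M 0 0 * v 0 + M 0 1 * v 1 := by
  simp [Matrix.mulVec, dotProduct, Fin.sum_univ_two]
lemma mulVec1 (M : Matrix (Fin 2) (Fin 2) ℝ) (v : Fin 2 → ℝ) :
    M.mulVec v 1 = M 1 0 * v 0 + M 1 1 * v 1 := by
  simp [Matrix.mulVec, dotProduct, Fin.sum_univ_two]

lemma refl_eig_pos (ψ : ℝ) (v : Fin 2 → ℝ) (h : (reflMat ψ).mulVec v = v) :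
    ∃ t : ℝ, v = t • ![Real.cos ψ, Real.sin ψ] := by
  set s := Real.sin ψ with hs
  set c := Real.cos ψ with hc
  have hP : s^2 + c^2 = 1 := Real.sin_sq_add_cos_sq ψ
  have h0 := congrFun h 0
  have h1 := congrFun h 1
  rw [mulVec0] at h0; rw [mulVec1] at h1
  simp [reflMat, Real.cos_two_mul, Real.sin_two_mul, ← hs, ← hc] at h0 h1
  have hA : s * v 0 - c * v 1 = 0 := by
    linear_combination (-s/2) * h0 + (c/2) * h1 + (c * v 1) * hP
  by_cases hcz : c = 0
  · have hsz : s ≠ 0 := by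
      intro h'; rw [h', hcz] at hP; norm_num at hP
    refine ⟨v 1 / s, ?_⟩
    funext i; fin_cases i <;> simp [hcz]
    · have : s * v 0 = 0 := by rw [hcz] at hA; linarith
      exact (mul_eq_zero.mp this).resolve_left hsz
    · field_simp
  · refine ⟨v 0 / c, ?_⟩
    funext i; fin_cases i <;> simp
    · field_simp
    · field_simp; linear_combination -hA

lemma refl_eig_neg (ψ : ℝ) (v : Fin 2 → ℝ) (h : (reflMat ψ).mulVec v = -v) :
    ∃ t : ℝ, v = t • ![-Real.sin ψ, Real.cos ψ] := by
  set s := Real.sin ψ with hs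
  set c := Real.cos ψ with hc
  have hP : s^2 + c^2 = 1 := Real.sin_sq_add_cos_sq ψ
  have h0 := congrFun h 0
  have h1 := congrFun h 1
  rw [mulVec0] at h0; rw [mulVec1] at h1
  simp [reflMat, Real.cos_two_mul, Real.sin_two_mul, ← hs, ← hc] at h0 h1
  have hB : c * v 0 + s * v 1 = 0 := by
    linear_combination (c/2) * h0 + (s/2) * h1 - (c * v 0) * hP
  by_cases hsz : s = 0
  · have hcz : c ≠ 0 := by
      intro h'; rw [h', hsz] at hP; norm_num at hP
    refine ⟨v 1 / c, ?_⟩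
    funext i; fin_cases i <;> simp [hsz]
    · have : c * v 0 = 0 := by rw [hsz] at hB; linarith
      exact (mul_eq_zero.mp this).resolve_left hcz
    · field_simp
  · refine ⟨-(v 0) / s, ?_⟩
    funext i; fin_cases i <;> simp
    · field_simp
    · field_simp; linear_combination hB

lemma rot_eig (φ : ℝ) (v : Fin 2 → ℝ) (hv : v ≠ 0)
    (h : (rotMat φ).mulVec v = v ∨ (rotMat φ).mulVec v = -v) : Real.sin φ = 0 := by
  have hvv : v 0 ^ 2 + v 1 ^ 2 > 0 := by
    have : v 0 ≠ 0 ∨ v 1 ≠ 0 := by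
      by_contra hc
      push_neg at hc
      exact hv (funext fun i => by fin_cases i <;> simp [hc.1, hc.2])
    rcases this with h0 | h1
    · positivity
    · positivity
  have key : Real.sin φ * (v 0 ^ 2 + v 1 ^ 2) = 0 := by
    rcases h with h | h <;>
    · have h0 := congrFun h 0
      have h1 := congrFun h 1
      rw [mulVec0] at h0; rw [mulVec1] at h1
      simp [rotMat] at h0 h1
      linear_combination v 0 * h1 - v 1 * h0
  have := mul_eq_zero.mp key
  rcases this with h | h
  · exact h
  · linarith


/-- Let `α` belong to the dihedral group generated by reflections across lines at angles
`0` and `π/b` (`b` odd), and `r₂` the reflection across the `y`-axis. If a nonzero vector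
`v` satisfies `(α * r₂) v = ±v` and the direction of `v` is neither a multiple of `π/b`
nor `π/2` plus a multiple of `π/b`, then `α * r₂` is rotation by `π` and `α` is the
reflection across the `x`-axis. -/
theorem eigenvector_forces_rotation_pi (b : ℕ) (hb : 0 < b) (hbo : Odd b)
    (g₀ g₁ r₂ α : Matrix.orthogonalGroup (Fin 2) ℝ)
    (hg₀ : (g₀ : Matrix (Fin 2) (Fin 2) ℝ) = reflMat 0)
    (hg₁ : (g₁ : Matrix (Fin 2) (Fin 2) ℝ) = reflMat (Real.pi / b))
    (hr₂ : (r₂ : Matrix (Fin 2) (Fin 2) ℝ) = reflMat (Real.pi / 2))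
    (hα : α ∈ Subgroup.closure {g₀, g₁})
    (v : Fin 2 → ℝ) (hv : v ≠ 0)
    (heig : ((α * r₂ : Matrix.orthogonalGroup (Fin 2) ℝ) : Matrix (Fin 2) (Fin 2) ℝ).mulVec v = v ∨
            ((α * r₂ : Matrix.orthogonalGroup (Fin 2) ℝ) : Matrix (Fin 2) (Fin 2) ℝ).mulVec v = -v)
    (hdir : ∀ k : ℤ,
      (¬∃ t : ℝ, v = t • ![Real.cos ((k : ℝ) * Real.pi / b), Real.sin ((k : ℝ) * Real.pi / b)]) ∧
      (¬∃ t : ℝ, v = t • ![Real.cos (Real.pi / 2 + (k : ℝ) * Real.pi / b),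
                          Real.sin (Real.pi / 2 + (k : ℝ) * Real.pi / b)])) :
    ((α * r₂ : Matrix.orthogonalGroup (Fin 2) ℝ) : Matrix (Fin 2) (Fin 2) ℝ) = rotMat Real.pi ∧
      (α : Matrix (Fin 2) (Fin 2) ℝ) = reflMat 0 := by
  have hbR : (b:ℝ) ≠ 0 := Nat.cast_ne_zero.mpr hb.ne'
  have hcoe : ((α * r₂ : Matrix.orthogonalGroup (Fin 2) ℝ) : Matrix (Fin 2) (Fin 2) ℝ)
      = (α : Matrix (Fin 2) (Fin 2) ℝ) * (r₂ : Matrix (Fin 2) (Fin 2) ℝ) := rfl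
  rcases dihedral_classify b g₀ g₁ hg₀ hg₁ α hα with ⟨k, hk⟩ | ⟨k, hk⟩
  · -- α is a rotation: α * r₂ is a reflection, contradiction
    exfalso
    have hαr : ((α * r₂ : Matrix.orthogonalGroup (Fin 2) ℝ) : Matrix (Fin 2) (Fin 2) ℝ)
        = reflMat (Real.pi / 2 + (k:ℝ) * Real.pi / b) := by
      rw [hcoe, hk, hr₂, rot_mul_refl]
      congr 1; ring
    rw [hαr] at heig
    rcases heig with h | h
    · exact (hdir k).2 (refl_eig_pos _ v h)
    · obtain ⟨t, ht⟩ := refl_eig_neg _ v h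
      refine (hdir k).1 ⟨-t, ?_⟩
      have e1 : Real.sin (Real.pi / 2 + (k:ℝ) * Real.pi / b) = Real.cos ((k:ℝ) * Real.pi / b) := by
        rw [Real.sin_add]; simp
      have e2 : Real.cos (Real.pi / 2 + (k:ℝ) * Real.pi / b) = -Real.sin ((k:ℝ) * Real.pi / b) := by
        rw [Real.cos_add]; simp
      rw [ht, e1, e2]
      funext i; fin_cases i <;> simp <;> ring
  · -- α is a reflection: α * r₂ is a rotation
    set φ : ℝ := 2 * ((k:ℝ) * Real.pi / b - Real.pi / 2) with hφ
    have hαr : ((α * r₂ : Matrix.orthogonalGroup (Fin 2) ℝ) : Matrix (Fin 2) (Fin 2) ℝ)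
        = rotMat φ := by
      rw [hcoe, hk, hr₂, refl_mul_refl]
    rw [hαr] at heig
    have hsin : Real.sin φ = 0 := rot_eig φ v hv heig
    have hcossq : Real.cos φ * Real.cos φ = 1 := by
      have := Real.sin_sq_add_cos_sq φ
      nlinarith
    have hφ2 : φ = 2 * (k:ℝ) * Real.pi / b - Real.pi := by rw [hφ]; ring
    rcases mul_self_eq_one_iff.mp hcossq with hcos | hcos
    · -- cos φ = 1 : impossible
      exfalso
      have hc2 : Real.cos (2 * (k:ℝ) * Real.pi / b) = -1 := by
        have : Real.cos φ = -Real.cos (2 * (k:ℝ) * Real.pi / b) := by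
          rw [hφ2, Real.cos_sub_pi]
        rw [this] at hcos; linarith
      have hc4 : Real.cos (2 * (2 * (k:ℝ) * Real.pi / b)) = 1 := by
        rw [Real.cos_two_mul, hc2]; norm_num
      obtain ⟨n, hn⟩ := Real.cos_eq_one_iff _ |>.mp hc4
      have hreal : (n:ℝ) * (b:ℝ) = 2 * (k:ℝ) := by
        have hπ : (Real.pi) ≠ 0 := Real.pi_ne_zero
        field_simp at hn
        nlinarith [Real.pi_pos]
      have hint : n * (b:ℤ) = 2 * k := by exact_mod_cast hreal
      have heven : Even n := by
        have h2k : Even (n * (b:ℤ)) := by rw [hint]; exact even_two_mul k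
        rcases Int.even_mul.mp h2k with h | h
        · exact h
        · exact absurd h (Int.not_even_iff_odd.mpr (by exact_mod_cast hbo) )
      obtain ⟨m, hm⟩ := heven
      have hkm : k = m * (b:ℤ) := by
        have h2 : 2 * (m * (b:ℤ)) = 2 * k := by rw [← hint, hm]; ring
        linarith
      have : Real.cos (2 * (k:ℝ) * Real.pi / b) = 1 := by
        have harg : 2 * (k:ℝ) * Real.pi / b = (m:ℝ) * (2 * Real.pi) := by
          rw [hkm]; push_cast; field_simp
        rw [harg, Real.cos_int_mul_two_pi]
      rw [this] at hc2; norm_num at hc2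
    · -- cos φ = -1 : the conclusion
      have h1 : ((α * r₂ : Matrix.orthogonalGroup (Fin 2) ℝ) : Matrix (Fin 2) (Fin 2) ℝ)
          = rotMat Real.pi := by
        rw [hαr]
        simp [rotMat, hsin, hcos, Real.cos_pi, Real.sin_pi]
      refine ⟨h1, ?_⟩
      have hr2sq : reflMat (Real.pi/2) * reflMat (Real.pi/2) = 1 := by
        rw [refl_mul_refl, sub_self, mul_zero, rot_zero]
      have : (α : Matrix (Fin 2) (Fin 2) ℝ)
          = ((α * r₂ : Matrix.orthogonalGroup (Fin 2) ℝ) : Matrix (Fin 2) (Fin 2) ℝ)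
            * reflMat (Real.pi/2) := by
        rw [hcoe, hr₂, mul_assoc, hr2sq, mul_one]
      rw [this, h1, rot_mul_refl]
      have harg : Real.pi/2 + Real.pi/2 = Real.pi := by ring
      rw [harg]
      norm_num [reflMat, Real.cos_two_pi, Real.sin_two_pi]
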